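/- Let σ > 0, g ≥ 0, γ ∈ ℝ and ℓ(ξ) = √(σ|ξ|³ + g|ξ| + γ²/4). The Fourier multipliers L(D) with symbol ℓ(ξ) and M(D) with symbol ℓ(ξ)|ξ|^{-1} are such that for the linear system ∂_t η + i(γ/2)η + ζ_α = 0, ∂_t ζ + i(γ/2)ζ + iσ η_αα - ig η - (γ²/4)∂_α^{-1}η = 0 restricted to holomorphic functions (Fourier support in ξ ≤ 0), the transformed unknowns (Mη, ζ) satisfy ∂_t(Mη) + i(γ/2)(Mη) - iL(D)ζ = 0 and ∂_t ζ - iL(D)(Mη) + i(γ/2)ζ = 0; i.e., the system is symmetric with equal off-diagonal operators -iL(D). -/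

import Mathlib

noncomputable section

/-- The symbol `ℓ(ξ) = √(σ|ξ|³ + g|ξ| + γ²/4)` of the operator `L(D)`. -/
def ellSymbol (σ g γ ξ : ℝ) : ℝ := Real.sqrt (σ * |ξ| ^ 3 + g * |ξ| + γ ^ 2 / 4)

/-- The symbol of `M(D) = L(D)|D|⁻¹`. -/
def mSymbol (σ g γ ξ : ℝ) : ℝ := ellSymbol σ g γ ξ / |ξ|

/-- Symmetrization of the linear system
`∂_t η + i(γ/2)η + ζ_α = 0`,
`∂_t ζ + i(γ/2)ζ + iσ η_αα - ig η - (γ²/4)∂_α^{-1} η = 0`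
restricted to holomorphic functions, stated on each negative frequency
`ξ < 0` (where `ζ_α` has symbol `iξ`, `η_αα` has symbol `(iξ)² = -ξ²` and
`∂_α^{-1}` has symbol `(iξ)⁻¹`): the transformed unknowns `(M(ξ)η, ζ)`
satisfy the symmetric system with equal off-diagonal operators `-iL`, i.e.
`∂_t(Mη) + i(γ/2)(Mη) - iℓ(ξ)ζ = 0` and `∂_t ζ - iℓ(ξ)(Mη) + i(γ/2)ζ = 0`. -/
theorem linear_system_symmetrization (σ g γ ξ : ℝ)
    (hσ : 0 < σ) (hg : 0 ≤ g) (hξ : ξ < 0) (η ζ : ℝ → ℂ)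
    (hη : ∀ t : ℝ, HasDerivAt η
        (-(Complex.I * ((γ : ℂ) / 2)) * η t - Complex.I * (ξ : ℂ) * ζ t) t)
    (hζ : ∀ t : ℝ, HasDerivAt ζ
        (-(Complex.I * ((γ : ℂ) / 2)) * ζ t + Complex.I * (σ : ℂ) * (ξ : ℂ) ^ 2 * η t
          + Complex.I * (g : ℂ) * η t
          + ((γ : ℂ) ^ 2 / 4) * (Complex.I * (ξ : ℂ))⁻¹ * η t) t) :
    (∀ t : ℝ, HasDerivAt (fun s => (mSymbol σ g γ ξ : ℂ) * η s)
        (-(Complex.I * ((γ : ℂ) / 2)) * ((mSymbol σ g γ ξ : ℂ) * η t)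
          + Complex.I * (ellSymbol σ g γ ξ : ℂ) * ζ t) t) ∧
    (∀ t : ℝ, HasDerivAt ζ
        (Complex.I * (ellSymbol σ g γ ξ : ℂ) * ((mSymbol σ g γ ξ : ℂ) * η t)
          - Complex.I * ((γ : ℂ) / 2) * ζ t) t) := by
  have habs : |ξ| = -ξ := abs_of_neg hξ
  have hξR : ξ ≠ 0 := ne_of_lt hξ
  have hξ0 : (ξ : ℂ) ≠ 0 := by exact_mod_cast hξR
  have hℓsq : (ellSymbol σ g γ ξ) ^ 2 = -(σ * ξ ^ 3) - g * ξ + γ ^ 2 / 4 := by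
    rw [ellSymbol, Real.sq_sqrt (by positivity)]
    rw [habs]; ring
  have hℓsqC : ((ellSymbol σ g γ ξ : ℂ)) ^ 2 = -(σ * ξ ^ 3) - g * ξ + (γ : ℂ) ^ 2 / 4 := by
    exact_mod_cast congrArg (fun x : ℝ => (x : ℂ)) hℓsq
  have hmC : ((mSymbol σ g γ ξ : ℂ)) = (ellSymbol σ g γ ξ : ℂ) / (-(ξ : ℂ)) := by
    rw [mSymbol, habs]; push_cast; ring
  constructor
  · intro t
    have h := (hη t).const_mul ((mSymbol σ g γ ξ : ℂ))
    refine h.congr_deriv ?_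
    rw [hmC]
    field_simp
    ring
  · intro t
    convert hζ t using 1
    rw [hmC, mul_inv, Complex.inv_I]
    have hI : Complex.I ≠ 0 := Complex.I_ne_zero
    have hinv : (ξ : ℂ) * (ξ : ℂ)⁻¹ = 1 := mul_inv_cancel₀ hξ0
    linear_combination (-Complex.I * (ξ : ℂ)⁻¹ * η t) * hℓsqC
      + (Complex.I * (σ : ℂ) * (ξ : ℂ) ^ 2 * η t + Complex.I * (g : ℂ) * η t) * hinv
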